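/- Let ε, Δt > 0 and μ ∈ ℝ. Suppose V : ℝ → ℂ² is C¹ and 2π-periodic, W : ℝ → ℂ² is continuous, and Q(V)(τ) = W(τ) for all τ, where Q(V)(τ) := V(τ) + (Δt/ε) iμ A(τ) V(τ) + (Δt/ε²) V′(τ). Then for every τ ∈ ℝ, ‖V(τ)‖ ≤ sup_{s ∈ [0,2π]} ‖W(s)‖, where ‖·‖ denotes the Euclidean norm on ℂ². In particular, the operator Q is injective on C¹ 2π-periodic functions. -/

import Mathlib

open Real Complex Matrix

/-- `A(τ) = [[0, e^{2iτ}],[e^{−2iτ}, 0]]`. -/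
noncomputable def Amat (τ : ℝ) : Matrix (Fin 2) (Fin 2) ℂ :=
  !![0, Complex.exp (2 * Complex.I * τ); Complex.exp (-2 * Complex.I * τ), 0]

/-- The Euclidean norm on `ℂ²`. -/
noncomputable def enorm2 (v : Fin 2 → ℂ) : ℝ :=
  Real.sqrt (Complex.normSq (v 0) + Complex.normSq (v 1))

/-- The operator `Q(V)(τ) = V(τ) + (Δt/ε) iμ A(τ) V(τ) + (Δt/ε²) V′(τ)`. -/
noncomputable def Qop (ε Δt μ : ℝ) (V : ℝ → Fin 2 → ℂ) (τ : ℝ) : Fin 2 → ℂ :=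
  V τ + ((Δt / ε : ℝ) : ℂ) • (Complex.I * (μ : ℂ)) • (Amat τ).mulVec (V τ) +
    ((Δt / ε ^ 2 : ℝ) : ℂ) • deriv V τ

noncomputable def Jmap : (Fin 2 → ℂ) ≃L[ℂ] EuclideanSpace ℂ (Fin 2) :=
  (EuclideanSpace.equiv (Fin 2) ℂ).symm

lemma Jmap_apply (v : Fin 2 → ℂ) (i : Fin 2) : Jmap v i = v i := rfl

lemma enorm2_eq (v : Fin 2 → ℂ) : enorm2 v = ‖Jmap v‖ := by
  rw [EuclideanSpace.norm_eq]
  simp [enorm2, Fin.sum_univ_two, Jmap_apply, Complex.sq_norm]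

-- the Hermitian-ness computation
lemma inner_A_real (τ : ℝ) (v : Fin 2 → ℂ) :
    (starRingEnd ℂ) (inner ℂ (Jmap v) (Jmap ((Amat τ).mulVec v)) : ℂ)
      = (inner ℂ (Jmap v) (Jmap ((Amat τ).mulVec v)) : ℂ) := by
  simp only [PiLp.inner_apply, Fin.sum_univ_two, RCLike.inner_apply, Jmap_apply]
  simp [Amat, Matrix.mulVec, dotProduct, Fin.sum_univ_two, map_add, _root_.map_mul,
    map_ofNat, ← Complex.exp_conj, Complex.conj_ofReal]
  ring_nf

theorem key (ε Δt : ℝ) (hε : 0 < ε) (hΔt : 0 < Δt) (μ : ℝ)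
    (V : ℝ → Fin 2 → ℂ) (hV : ContDiff ℝ 1 V) (hVper : Function.Periodic V (2 * π))
    (W : ℝ → Fin 2 → ℂ) (hWc : Continuous W)
    (hQ : ∀ τ : ℝ, Qop ε Δt μ V τ = W τ) (τ : ℝ) :
    enorm2 (V τ) ≤ sSup ((fun s => enorm2 (W s)) '' Set.Icc 0 (2 * π)) := by
  set U : ℝ → EuclideanSpace ℂ (Fin 2) := fun t => Jmap (V t) with hU
  have hVd : ∀ t, HasDerivAt V (deriv V t) t := fun t =>
    ((hV.differentiable one_ne_zero) t).hasDerivAt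
  have hUd : ∀ t, HasDerivAt U (Jmap (deriv V t)) t := fun t =>
    ((Jmap.toContinuousLinearMap.restrictScalars ℝ).hasFDerivAt.comp_hasDerivAt t (hVd t))
  set g : ℝ → ℝ := fun t => Complex.re (inner ℂ (U t) (U t) : ℂ) with hg
  have hgd : ∀ t, HasDerivAt g (2 * Complex.re (inner ℂ (U t) (Jmap (deriv V t)) : ℂ)) t := by
    intro t
    have h1 := (hUd t).inner ℂ (hUd t)
    have h2 : HasDerivAt g (Complex.reCLM (inner ℂ (U t) (Jmap (deriv V t)) +
        inner ℂ (Jmap (deriv V t)) (U t))) t := Complex.reCLM.hasFDerivAt.comp_hasDerivAt t h1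
    convert h2 using 1
    simp only [Complex.reCLM_apply, map_add]
    rw [← inner_conj_symm (Jmap (deriv V t)) (U t)]
    simp only [Complex.conj_re]
    ring
  have hgval : ∀ t, g t = ‖U t‖ ^ 2 := fun t => by
    simpa only [RCLike.re_to_complex] using inner_self_eq_norm_sq (𝕜 := ℂ) (U t)
  have gper : Function.Periodic g (2 * π) := fun t => by
    simp only [hg, hU, hVper t]
  have gc : Continuous g := by
    refine continuous_iff_continuousAt.mpr fun t => ((hgd t).differentiableAt).continuousAt
  have hIcc : (Set.Icc (0:ℝ) (2*π)).Nonempty := Set.nonempty_Icc.mpr (by positivity)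
  obtain ⟨τ₀, hτ₀mem, hτ₀max⟩ := isCompact_Icc.exists_isMaxOn hIcc gc.continuousOn
  have hglob : ∀ t, g t ≤ g τ₀ := by
    intro t
    obtain ⟨y, hy, hyeq⟩ := gper.exists_mem_Ico₀ (by positivity) t
    rw [hyeq]
    exact hτ₀max (Set.Ico_subset_Icc_self hy)
  have hloc : IsLocalMax g τ₀ := Filter.Eventually.of_forall hglob
  have hd0 := hloc.hasDerivAt_eq_zero (hgd τ₀)
  have hre0 : Complex.re (inner ℂ (U τ₀) (Jmap (deriv V τ₀)) : ℂ) = 0 := by linarith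
  -- the ODE relation
  have heq : ((Δt / ε ^ 2 : ℝ) : ℂ) • deriv V τ₀ =
      W τ₀ - V τ₀ - ((Δt / ε : ℝ) : ℂ) • (Complex.I * (μ : ℂ)) • (Amat τ₀).mulVec (V τ₀) := by
    have := hQ τ₀
    rw [Qop] at this
    rw [← this]; abel
  set S : ℂ := inner ℂ (U τ₀) (Jmap ((Amat τ₀).mulVec (V τ₀))) with hS
  have hSim : S.im = 0 := Complex.conj_eq_iff_im.mp (inner_A_real τ₀ (V τ₀))
  have hinner : (Δt / ε ^ 2) * Complex.re (inner ℂ (U τ₀) (Jmap (deriv V τ₀)) : ℂ)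
      = Complex.re (inner ℂ (U τ₀) (Jmap (W τ₀)) : ℂ) - ‖U τ₀‖ ^ 2
        - Complex.re (((Δt / ε : ℝ) : ℂ) * ((Complex.I * (μ : ℂ)) * S)) := by
    have h3 : (inner ℂ (U τ₀) (Jmap (((Δt / ε ^ 2 : ℝ) : ℂ) • deriv V τ₀)) : ℂ)
        = (inner ℂ (U τ₀) (Jmap (W τ₀)) : ℂ) - (inner ℂ (U τ₀) (U τ₀) : ℂ)
          - ((Δt / ε : ℝ) : ℂ) * ((Complex.I * (μ : ℂ)) * S) := by
      rw [heq]
      simp only [map_sub, _root_.map_smul, inner_sub_right, inner_smul_right, hS, hU]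
    have h4 : (inner ℂ (U τ₀) (Jmap (((Δt / ε ^ 2 : ℝ) : ℂ) • deriv V τ₀)) : ℂ)
        = ((Δt / ε ^ 2 : ℝ) : ℂ) * (inner ℂ (U τ₀) (Jmap (deriv V τ₀)) : ℂ) := by
      rw [_root_.map_smul, inner_smul_right]
    rw [h4] at h3
    have := congrArg Complex.re h3
    rw [Complex.re_ofReal_mul] at this
    rw [this, Complex.sub_re, Complex.sub_re]
    have h10 : (inner ℂ (U τ₀) (U τ₀) : ℂ).re = ‖U τ₀‖ ^ 2 := by
      simpa only [RCLike.re_to_complex] using inner_self_eq_norm_sq (𝕜 := ℂ) (U τ₀)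
    rw [h10]
  have hterm : Complex.re (((Δt / ε : ℝ) : ℂ) * ((Complex.I * (μ : ℂ)) * S)) = 0 := by
    rw [Complex.re_ofReal_mul]
    simp [Complex.mul_re, Complex.mul_im, hSim]
  have hmaxbound : ‖U τ₀‖ ≤ ‖Jmap (W τ₀)‖ := by
    have h5 : ‖U τ₀‖ ^ 2 = Complex.re (inner ℂ (U τ₀) (Jmap (W τ₀)) : ℂ) := by
      rw [hre0] at hinner; rw [hterm] at hinner; linarith
    have h6 : Complex.re (inner ℂ (U τ₀) (Jmap (W τ₀)) : ℂ)
        ≤ ‖(inner ℂ (U τ₀) (Jmap (W τ₀)) : ℂ)‖ := Complex.re_le_norm _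
    have h7 := norm_inner_le_norm (𝕜 := ℂ) (U τ₀) (Jmap (W τ₀))
    nlinarith [norm_nonneg (U τ₀), norm_nonneg (Jmap (W τ₀))]
  have hbdd : BddAbove ((fun s => enorm2 (W s)) '' Set.Icc 0 (2 * π)) := by
    have hc : Continuous fun s => enorm2 (W s) := by
      simp only [enorm2_eq]
      exact (Jmap.continuous.comp hWc).norm
    exact (isCompact_Icc.image hc).bddAbove
  have hsup : enorm2 (W τ₀) ≤ sSup ((fun s => enorm2 (W s)) '' Set.Icc 0 (2 * π)) :=
    le_csSup hbdd ⟨τ₀, hτ₀mem, rfl⟩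
  have h8 : enorm2 (V τ) ≤ enorm2 (W τ₀) := by
    rw [enorm2_eq, enorm2_eq]
    have h9 : ‖U τ‖ ^ 2 ≤ ‖U τ₀‖ ^ 2 := by
      rw [← hgval, ← hgval]; exact hglob τ
    nlinarith [norm_nonneg (U τ), norm_nonneg (U τ₀), norm_nonneg (Jmap (W τ₀))]
  linarith
/-- If `V` is `C¹` and `2π`-periodic and `Q(V) = W` with `W`
continuous, then `‖V(τ)‖ ≤ sup_{s∈[0,2π]} ‖W(s)‖` for every `τ`; in particular,
`Q` is injective on `C¹` `2π`-periodic functions. -/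
theorem stmt_15 (ε Δt : ℝ) (hε : 0 < ε) (hΔt : 0 < Δt) (μ : ℝ)
    (V : ℝ → Fin 2 → ℂ) (hV : ContDiff ℝ 1 V) (hVper : Function.Periodic V (2 * π))
    (W : ℝ → Fin 2 → ℂ) (hWc : Continuous W)
    (hQ : ∀ τ : ℝ, Qop ε Δt μ V τ = W τ) :
    (∀ τ : ℝ, enorm2 (V τ) ≤ sSup ((fun s => enorm2 (W s)) '' Set.Icc 0 (2 * π))) ∧
    (∀ V₁ V₂ : ℝ → Fin 2 → ℂ, ContDiff ℝ 1 V₁ → ContDiff ℝ 1 V₂ →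
      Function.Periodic V₁ (2 * π) → Function.Periodic V₂ (2 * π) →
      (∀ τ : ℝ, Qop ε Δt μ V₁ τ = Qop ε Δt μ V₂ τ) → V₁ = V₂) := by
  constructor
  · exact key ε Δt hε hΔt μ V hV hVper W hWc hQ
  · intro V₁ V₂ h₁ h₂ hp₁ hp₂ hQeq
    set D : ℝ → Fin 2 → ℂ := fun t => V₁ t - V₂ t with hD
    have hDc : ContDiff ℝ 1 D := h₁.sub h₂
    have hDper : Function.Periodic D (2 * π) := fun t => by simp [hD, hp₁ t, hp₂ t]
    have hDQ : ∀ τ : ℝ, Qop ε Δt μ D τ = (fun _ : ℝ => (0 : Fin 2 → ℂ)) τ := by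
      intro τ
      have hd : deriv D τ = deriv V₁ τ - deriv V₂ τ :=
        deriv_fun_sub ((h₁.differentiable one_ne_zero) τ) ((h₂.differentiable one_ne_zero) τ)
      have hsplit : Qop ε Δt μ D τ = Qop ε Δt μ V₁ τ - Qop ε Δt μ V₂ τ := by
        simp only [Qop, hd]
        simp only [hD, Matrix.mulVec_sub, smul_sub]
        abel
      rw [hsplit, hQeq τ, sub_self]
    have hb := key ε Δt hε hΔt μ D hDc hDper (fun _ => 0) continuous_const hDQ
    have hzero : sSup ((fun s : ℝ => enorm2 ((fun _ : ℝ => (0 : Fin 2 → ℂ)) s))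
        '' Set.Icc 0 (2 * π)) = 0 := by
      have himg : (fun s : ℝ => enorm2 ((fun _ : ℝ => (0 : Fin 2 → ℂ)) s))
          '' Set.Icc 0 (2 * π) = {0} := by
        have hne : (Set.Icc (0:ℝ) (2 * π)).Nonempty := Set.nonempty_Icc.mpr (by positivity)
        rw [show (fun s : ℝ => enorm2 ((fun _ : ℝ => (0 : Fin 2 → ℂ)) s))
            = fun _ : ℝ => (0:ℝ) from by funext s; simp [enorm2]]
        exact hne.image_const 0
      rw [himg, csSup_singleton]
    funext t
    have h0 : enorm2 (D t) = 0 :=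
      le_antisymm (by simpa [hzero] using hb t) (Real.sqrt_nonneg _)
    have hnn0 := Complex.normSq_nonneg (D t 0)
    have hnn1 := Complex.normSq_nonneg (D t 1)
    have hsum : Complex.normSq (D t 0) + Complex.normSq (D t 1) ≤ 0 :=
      Real.sqrt_eq_zero'.mp h0
    have h00 : D t 0 = 0 := Complex.normSq_eq_zero.mp (by linarith)
    have h11 : D t 1 = 0 := Complex.normSq_eq_zero.mp (by linarith)
    funext i
    fin_cases i
    · exact sub_eq_zero.mp h00
    · exact sub_eq_zero.mp h11
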